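/- Let A be a symmetric positive definite block tridiagonal matrix with diagonal blocks b_k and subdiagonal blocks c_k, right-hand side r with blocks r_k, and let d_k^f, s_k^f and d_k^b, s_k^b be the forward and backward elimination sequences (d_1^f = b_1, s_1^f = r_1, d_k^f = b_k − c_k (d_{k−1}^f)⁻¹ c_kᵀ, s_k^f = r_k − c_k (d_{k−1}^f)⁻¹ s_{k−1}^f; d_N^b = b_N, s_N^b = r_N, d_k^b = b_k − c_{k+1}ᵀ (d_{k+1}^b)⁻¹ c_{k+1}, s_k^b = r_k − c_{k+1}ᵀ (d_{k+1}^b)⁻¹ s_{k+1}^b). Then for every k, the k-th block e_k of the solution of A e = r satisfies e_k = (d_k^f + d_k^b − b_k)⁻¹ (s_k^f + s_k^b − r_k). -/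

import Mathlib

open Matrix Finset



/-- Symmetric block tridiagonal matrix with `N` diagonal blocks `b 0, …, b (N-1)` of size
`n`, subdiagonal blocks `c i` in (0-based) position `(i, i-1)` for `i = 1,…,N-1`, and the
transposes `(c (i+1))ᵀ` in position `(i, i+1)`. -/
def blockTri (N n : ℕ) (b c : ℕ → Matrix (Fin n) (Fin n) ℝ) :
    Matrix (Fin N × Fin n) (Fin N × Fin n) ℝ :=
  fun p r =>
    if p.1 = r.1 then b (p.1 : ℕ) p.2 r.2
    else if (r.1 : ℕ) + 1 = (p.1 : ℕ) then c (p.1 : ℕ) p.2 r.2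
    else if (p.1 : ℕ) + 1 = (r.1 : ℕ) then c (r.1 : ℕ) r.2 p.2
    else 0

/-- Forward (Thomas) block elimination: `d 0 = b 0`,
`d (k+1) = b (k+1) − c (k+1) (d k)⁻¹ (c (k+1))ᵀ`. -/
noncomputable def fwdD {n : ℕ} (b c : ℕ → Matrix (Fin n) (Fin n) ℝ) :
    ℕ → Matrix (Fin n) (Fin n) ℝ
  | 0 => b 0
  | k + 1 => b (k + 1) - c (k + 1) * (fwdD b c k)⁻¹ * (c (k + 1))ᵀ

/-- Auxiliary backward elimination sequence: `bwdAux N b c j` is the backward Schur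
complement at block index `N - 1 - j`. -/
noncomputable def bwdAux {n : ℕ} (N : ℕ) (b c : ℕ → Matrix (Fin n) (Fin n) ℝ) :
    ℕ → Matrix (Fin n) (Fin n) ℝ
  | 0 => b (N - 1)
  | j + 1 => b (N - 1 - (j + 1)) - (c (N - 1 - j))ᵀ * (bwdAux N b c j)⁻¹ * c (N - 1 - j)

/-- Backward block elimination: `bwdD N b c (N-1) = b (N-1)` and
`bwdD N b c k = b k − (c (k+1))ᵀ (bwdD N b c (k+1))⁻¹ (c (k+1))` for `k < N-1`. -/
noncomputable def bwdD {n : ℕ} (N : ℕ) (b c : ℕ → Matrix (Fin n) (Fin n) ℝ) (k : ℕ) :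
    Matrix (Fin n) (Fin n) ℝ :=
  bwdAux N b c (N - 1 - k)

/-- Forward elimination of the right-hand side: `s 0 = r 0`,
`s (k+1) = r (k+1) − c (k+1) (d k)⁻¹ s k`. -/
noncomputable def fwdS {n : ℕ} (b c : ℕ → Matrix (Fin n) (Fin n) ℝ)
    (r : ℕ → Fin n → ℝ) : ℕ → Fin n → ℝ
  | 0 => r 0
  | k + 1 => r (k + 1) - (c (k + 1) * (fwdD b c k)⁻¹) *ᵥ (fwdS b c r k)

/-- Auxiliary backward elimination of the right-hand side. -/
noncomputable def bwdSAux {n : ℕ} (N : ℕ) (b c : ℕ → Matrix (Fin n) (Fin n) ℝ)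
    (r : ℕ → Fin n → ℝ) : ℕ → Fin n → ℝ
  | 0 => r (N - 1)
  | j + 1 => r (N - 1 - (j + 1)) -
      ((c (N - 1 - j))ᵀ * (bwdAux N b c j)⁻¹) *ᵥ (bwdSAux N b c r j)

/-- Backward elimination of the right-hand side:
`bwdS N b c r k = r k − (c (k+1))ᵀ (bwdD N b c (k+1))⁻¹ (bwdS N b c r (k+1))`. -/
noncomputable def bwdS {n : ℕ} (N : ℕ) (b c : ℕ → Matrix (Fin n) (Fin n) ℝ)
    (r : ℕ → Fin n → ℝ) (k : ℕ) : Fin n → ℝ :=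
  bwdSAux N b c r (N - 1 - k)


namespace Stmt13

variable {n : ℕ}

/-- helper: dot with transpose mulVec -/
lemma dot_t (M : Matrix (Fin n) (Fin n) ℝ) (u w : Fin n → ℝ) :
    u ⬝ᵥ (Mᵀ *ᵥ w) = w ⬝ᵥ (M *ᵥ u) := by
  rw [dotProduct_mulVec, vecMul_transpose, dotProduct_comm]

lemma dot_shift (M : Matrix (Fin n) (Fin n) ℝ) (v w : Fin n → ℝ) :
    v ⬝ᵥ (M *ᵥ w) = (Mᵀ *ᵥ v) ⬝ᵥ w := by
  rw [dotProduct_mulVec, ← mulVec_transpose]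

/-- the quadratic form of the leading `M+1` blocks -/
noncomputable def Qform (b c : ℕ → Matrix (Fin n) (Fin n) ℝ) (M : ℕ) (x : ℕ → Fin n → ℝ) : ℝ :=
  ∑ j ∈ Finset.range (M+1), x j ⬝ᵥ (b j *ᵥ x j)
  + 2 * ∑ j ∈ Finset.range M, x (j+1) ⬝ᵥ (c (j+1) *ᵥ x j)

lemma Qform_succ (b c : ℕ → Matrix (Fin n) (Fin n) ℝ) (M : ℕ) (x : ℕ → Fin n → ℝ) :
    Qform b c (M+1) x = Qform b c M x +
      (x (M+1) ⬝ᵥ (b (M+1) *ᵥ x (M+1)) + 2 * (x (M+1) ⬝ᵥ (c (M+1) *ᵥ x M))) := by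
  simp only [Qform, Finset.sum_range_succ]; ring

lemma Qform_congr {b c : ℕ → Matrix (Fin n) (Fin n) ℝ} {M : ℕ} {x y : ℕ → Fin n → ℝ}
    (h : ∀ j ≤ M, x j = y j) : Qform b c M x = Qform b c M y := by
  unfold Qform
  congr 1
  · exact Finset.sum_congr rfl fun j hj => by
      rw [h j (by simpa [Nat.lt_succ_iff] using hj)]
  · congr 1
    exact Finset.sum_congr rfl fun j hj => by
      have hj' := Finset.mem_range.1 hj
      rw [h j (by omega), h (j+1) (by omega)]

lemma Qform_tail {b c : ℕ → Matrix (Fin n) (Fin n) ℝ} {m : ℕ} {x : ℕ → Fin n → ℝ}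
    (h : ∀ j, m < j → x j = 0) : ∀ M, m ≤ M → Qform b c M x = Qform b c m x := by
  intro M hM
  induction M, hM using Nat.le_induction with
  | base => rfl
  | succ M hM ih =>
      rw [Qform_succ, ih, h (M+1) (by omega)]
      simp

/-- the forward optimal sequence with top block `v` at index `m` -/
noncomputable def fseq (b c : ℕ → Matrix (Fin n) (Fin n) ℝ) : ℕ → (Fin n → ℝ) → ℕ → Fin n → ℝ
  | 0, v => fun j => if j = 0 then v else 0
  | m+1, v => fun j => if j = m+1 then v
      else fseq b c m (-((fwdD b c m)⁻¹ *ᵥ ((c (m+1))ᵀ *ᵥ v))) j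

lemma fseq_self (b c : ℕ → Matrix (Fin n) (Fin n) ℝ) (m : ℕ) (v : Fin n → ℝ) :
    fseq b c m v m = v := by cases m <;> simp [fseq]

lemma fseq_gt (b c : ℕ → Matrix (Fin n) (Fin n) ℝ) (v : Fin n → ℝ) :
    ∀ m j, m < j → fseq b c m v j = 0 := by
  intro m
  induction m generalizing v with
  | zero => intro j hj; simp only [fseq]; rw [if_neg (by omega)]
  | succ m ih =>
      intro j hj
      simp only [fseq]
      rw [if_neg (by omega)]
      exact ih _ j (by omega)

lemma Qform_fseq (b c : ℕ → Matrix (Fin n) (Fin n) ℝ) (m : ℕ) (v : Fin n → ℝ)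
    (hsym : ∀ j, j < m → (fwdD b c j)ᵀ = fwdD b c j)
    (hinv : ∀ j, j < m → IsUnit (fwdD b c j).det) :
    Qform b c m (fseq b c m v) = v ⬝ᵥ (fwdD b c m *ᵥ v) := by
  induction m generalizing v with
  | zero => simp [Qform, fseq, fwdD]
  | succ m ih =>
      set w : Fin n → ℝ := -((fwdD b c m)⁻¹ *ᵥ ((c (m+1))ᵀ *ᵥ v)) with hw
      have hx : ∀ j ≤ m, fseq b c (m+1) v j = fseq b c m w j := by
        intro j hj
        simp only [fseq]
        rw [if_neg (by omega)]
      rw [Qform_succ, Qform_congr hx, ih _ (fun j hj => hsym j (by omega))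
        (fun j hj => hinv j (by omega))]
      have hvtop : fseq b c (m+1) v (m+1) = v := fseq_self ..
      have hmid : fseq b c (m+1) v m = w := by rw [hx m le_rfl, fseq_self]
      rw [hvtop, hmid]
      -- now pure matrix algebra
      have hdinv : fwdD b c m * (fwdD b c m)⁻¹ = 1 :=
        Matrix.mul_nonsing_inv _ (hinv m (by omega))
      have hsymm : (fwdD b c m)ᵀ = fwdD b c m := hsym m (by omega)
      have hsyminv : ((fwdD b c m)⁻¹)ᵀ = (fwdD b c m)⁻¹ := by
        rw [Matrix.transpose_nonsing_inv, hsymm]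
      set d := fwdD b c m
      set u : Fin n → ℝ := (c (m+1))ᵀ *ᵥ v with hu
      have h1 : w ⬝ᵥ (d *ᵥ w) = u ⬝ᵥ (d⁻¹ *ᵥ u) := by
        have hdw : d *ᵥ w = -u := by
          rw [hw, Matrix.mulVec_neg, Matrix.mulVec_mulVec, hdinv, Matrix.one_mulVec]
        rw [hdw, hw]
        simp only [dotProduct_neg, neg_dotProduct, neg_neg]
        exact dotProduct_comm _ _
      have h2 : v ⬝ᵥ (c (m+1) *ᵥ w) = -(u ⬝ᵥ (d⁻¹ *ᵥ u)) := by
        rw [dot_shift, ← hu, hw]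
        simp [dotProduct_neg]
      have h3 : v ⬝ᵥ (fwdD b c (m+1) *ᵥ v) =
          v ⬝ᵥ (b (m+1) *ᵥ v) - u ⬝ᵥ (d⁻¹ *ᵥ u) := by
        show v ⬝ᵥ ((b (m+1) - c (m+1) * d⁻¹ * (c (m+1))ᵀ) *ᵥ v) = _
        rw [Matrix.sub_mulVec, dotProduct_sub]
        congr 1
        rw [← Matrix.mulVec_mulVec, ← Matrix.mulVec_mulVec, dot_shift, ← hu]
      rw [h1, h2, h3]; ring


lemma herm_of_symm {M : Matrix (Fin n) (Fin n) ℝ} (h : Mᵀ = M) : M.IsHermitian := by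
  ext i j
  simpa [Matrix.conjTranspose_apply] using (congrFun (congrFun h j) i).symm

lemma fwdD_sym (b c : ℕ → Matrix (Fin n) (Fin n) ℝ) (m : ℕ)
    (hb : ∀ j, j ≤ m → (b j)ᵀ = b j) : (fwdD b c m)ᵀ = fwdD b c m := by
  induction m with
  | zero => exact hb 0 le_rfl
  | succ m ih =>
      show (b (m+1) - c (m+1) * (fwdD b c m)⁻¹ * (c (m+1))ᵀ)ᵀ = _
      rw [Matrix.transpose_sub, hb (m+1) le_rfl, Matrix.transpose_mul, Matrix.transpose_mul,
        Matrix.transpose_transpose, Matrix.transpose_nonsing_inv,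
        ih (fun j hj => hb j (by omega)), ← Matrix.mul_assoc]
      rfl

lemma fwdD_posDef (N : ℕ) (b c : ℕ → Matrix (Fin n) (Fin n) ℝ)
    (hb : ∀ j, j < N → (b j)ᵀ = b j)
    (hpos : ∀ x : ℕ → Fin n → ℝ, (∃ j, j < N ∧ x j ≠ 0) → 0 < Qform b c (N-1) x) :
    ∀ m, m < N → (fwdD b c m).PosDef := by
  intro m
  induction m using Nat.strong_induction_on with
  | _ m ih =>
    intro hm
    have hsym : ∀ j, j < m → (fwdD b c j)ᵀ = fwdD b c j := fun j hj =>
      fwdD_sym b c j (fun i hi => hb i (by omega))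
    have hinv : ∀ j, j < m → IsUnit (fwdD b c j).det := fun j hj =>
      (ih j hj (by omega)).det_pos.ne'.isUnit
    refine Matrix.posDef_iff_dotProduct_mulVec.mpr ⟨?_, ?_⟩
    · exact herm_of_symm (fwdD_sym b c m (fun j hj => hb j (by omega)))
    · intro v hv
      have hval : star v ⬝ᵥ (fwdD b c m *ᵥ v) = Qform b c (N-1) (fseq b c m v) := by
        rw [Qform_tail (fun j hj => fseq_gt b c v m j hj) (N-1) (by omega),
          Qform_fseq b c m v hsym hinv, star_trivial]
      rw [hval]
      exact hpos _ ⟨m, hm, by rw [fseq_self]; exact hv⟩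

/-- reversed diagonal blocks -/
def revB (N : ℕ) (b : ℕ → Matrix (Fin n) (Fin n) ℝ) : ℕ → Matrix (Fin n) (Fin n) ℝ :=
  fun j => b (N - 1 - j)

/-- reversed subdiagonal blocks -/
def revC (N : ℕ) (c : ℕ → Matrix (Fin n) (Fin n) ℝ) : ℕ → Matrix (Fin n) (Fin n) ℝ :=
  fun j => (c (N - j))ᵀ

lemma bwdAux_eq_fwdD (N : ℕ) (b c : ℕ → Matrix (Fin n) (Fin n) ℝ) (j : ℕ) :
    bwdAux N b c j = fwdD (revB N b) (revC N c) j := by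
  induction j with
  | zero => simp [bwdAux, fwdD, revB]
  | succ j ih =>
      show b (N - 1 - (j + 1)) - (c (N - 1 - j))ᵀ * (bwdAux N b c j)⁻¹ * c (N - 1 - j) = _
      rw [ih]
      show _ = revB N b (j+1) - revC N c (j+1) * _ * (revC N c (j+1))ᵀ
      rw [revB, revC, Matrix.transpose_transpose, show N - (j+1) = N - 1 - j by omega]

lemma bwdSAux_eq_fwdS (N : ℕ) (b c : ℕ → Matrix (Fin n) (Fin n) ℝ) (r : ℕ → Fin n → ℝ)
    (j : ℕ) : bwdSAux N b c r j = fwdS (revB N b) (revC N c) (fun i => r (N - 1 - i)) j := by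
  induction j with
  | zero => rfl
  | succ j ih =>
      show r (N - 1 - (j + 1)) - ((c (N - 1 - j))ᵀ * (bwdAux N b c j)⁻¹) *ᵥ _ = _
      rw [ih, bwdAux_eq_fwdD]
      show _ = (fun i => r (N - 1 - i)) (j+1) - (revC N c (j+1) * _) *ᵥ _
      rw [revC, show N - (j+1) = N - 1 - j by omega]

lemma Qform_rev (N : ℕ) (hN : 0 < N) (b c : ℕ → Matrix (Fin n) (Fin n) ℝ)
    (y : ℕ → Fin n → ℝ) :
    Qform (revB N b) (revC N c) (N-1) y = Qform b c (N-1) (fun j => y (N - 1 - j)) := by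
  unfold Qform
  congr 1
  · rw [show N - 1 + 1 = N by omega, ← Finset.sum_range_reflect]
    refine Finset.sum_congr rfl fun j hj => ?_
    have hj' := Finset.mem_range.1 hj
    simp only [revB]
    rw [show N - 1 - (N - 1 - j) = j from by omega]
  · congr 1
    rw [← Finset.sum_range_reflect (fun j => y (j+1) ⬝ᵥ (revC N c (j+1) *ᵥ y j)) (N-1)]
    refine Finset.sum_congr rfl fun j hj => ?_
    have hj' := Finset.mem_range.1 hj
    simp only [revC]
    rw [show N - 1 - 1 - j + 1 = N - 1 - j from by omega]
    rw [show N - 1 - 1 - j = N - 1 - (j + 1) from by omega]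
    rw [show N - (N - 1 - j) = j + 1 from by omega]
    exact dot_t ..

lemma Qform_split (b c : ℕ → Matrix (Fin n) (Fin n) ℝ) (x : ℕ → Fin n → ℝ) (k : ℕ) :
    ∀ M, k ≤ M → Qform b c M x = Qform b c k x +
      (∑ j ∈ Finset.range (M-k), x (k+1+j) ⬝ᵥ (b (k+1+j) *ᵥ x (k+1+j))
        + 2 * ∑ j ∈ Finset.range (M-k), x (k+1+j) ⬝ᵥ (c (k+1+j) *ᵥ x (k+j))) := by
  intro M hM
  induction M, hM using Nat.le_induction with
  | base => simp
  | succ M hM ih =>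
      rw [Qform_succ, ih, show M + 1 - k = (M - k) + 1 from by omega,
        Finset.sum_range_succ, Finset.sum_range_succ,
        show k + 1 + (M - k) = M + 1 from by omega,
        show k + (M - k) = M from by omega]
      ring

lemma combined_posDef (N : ℕ) (hN : 0 < N) (b c : ℕ → Matrix (Fin n) (Fin n) ℝ)
    (hb : ∀ j, j < N → (b j)ᵀ = b j)
    (hpos : ∀ x : ℕ → Fin n → ℝ, (∃ j, j < N ∧ x j ≠ 0) → 0 < Qform b c (N-1) x) :
    ∀ k, k < N → (fwdD b c k + bwdD N b c k - b k).PosDef := by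
  intro k hk
  set b' := revB N b with hb'def
  set c' := revC N c with hc'def
  have hb' : ∀ j, j < N → (b' j)ᵀ = b' j := by
    intro j hj
    rw [hb'def]
    show (b (N-1-j))ᵀ = b (N-1-j)
    exact hb _ (by omega)
  have hpos' : ∀ y : ℕ → Fin n → ℝ, (∃ j, j < N ∧ y j ≠ 0) → 0 < Qform b' c' (N-1) y := by
    rintro y ⟨j, hj, hy⟩
    rw [hb'def, hc'def, Qform_rev N hN]
    exact hpos _ ⟨N-1-j, by omega, by rw [show N-1-(N-1-j) = j from by omega]; exact hy⟩
  have fPD : ∀ m, m < N → (fwdD b c m).PosDef := fwdD_posDef N b c hb hpos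
  have bPD : ∀ m, m < N → (fwdD b' c' m).PosDef := fwdD_posDef N b' c' hb' hpos'
  set m := N - 1 - k with hm
  have hbwd : bwdD N b c k = fwdD b' c' m := bwdAux_eq_fwdD N b c m
  have hmN : m < N := by omega
  have hNk : N - 1 - m = k := by omega
  refine Matrix.posDef_iff_dotProduct_mulVec.mpr ⟨?_, ?_⟩
  · apply herm_of_symm
    rw [Matrix.transpose_sub, Matrix.transpose_add, hbwd,
      fwdD_sym b c k (fun j hj => hb j (by omega)),
      fwdD_sym b' c' m (fun j hj => hb' j (by omega)), hb k hk]
  · intro v hv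
    set y : ℕ → Fin n → ℝ := fseq b' c' m v with hy
    set x : ℕ → Fin n → ℝ := fun j => if j ≤ k then fseq b c k v j else y (N-1-j) with hx
    have hxk : x k = v := by rw [hx]; simp [fseq_self]
    have hxy : ∀ i, i ≤ m → y i = x (N-1-i) := by
      intro i hi
      rcases eq_or_lt_of_le hi with h | h
      · subst h
        rw [hNk, hxk, hy, fseq_self]
      · rw [hx]
        simp only []
        rw [if_neg (by omega), show N-1-(N-1-i) = i from by omega]
    -- value of the leading part
    have hA : Qform b c k x = v ⬝ᵥ (fwdD b c k *ᵥ v) := by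
      rw [Qform_congr (y := fseq b c k v) (fun j hj => by rw [hx]; simp [hj])]
      exact Qform_fseq b c k v
        (fun j hj => fwdD_sym b c j (fun i hi => hb i (by omega)))
        (fun j hj => (fPD j (by omega)).det_pos.ne'.isUnit)
    have hB : Qform b' c' m y = v ⬝ᵥ (fwdD b' c' m *ᵥ v) :=
      Qform_fseq b' c' m v
        (fun j hj => fwdD_sym b' c' j (fun i hi => hb' i (by omega)))
        (fun j hj => (bPD j (by omega)).det_pos.ne'.isUnit)
    -- the tail of Qform equals the primed Qform minus the k-diagonal term
    have hD1 : ∑ j ∈ Finset.range (m+1), y j ⬝ᵥ (b' j *ᵥ y j)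
        = v ⬝ᵥ (b k *ᵥ v) +
          ∑ j ∈ Finset.range m, x (k+1+j) ⬝ᵥ (b (k+1+j) *ᵥ x (k+1+j)) := by
      rw [← Finset.sum_range_reflect (fun j => y j ⬝ᵥ (b' j *ᵥ y j)) (m+1),
        Finset.sum_range_succ']
      have : ∀ j ∈ Finset.range m, y (m+1-1-(j+1)) ⬝ᵥ (b' (m+1-1-(j+1)) *ᵥ y (m+1-1-(j+1)))
          = x (k+1+j) ⬝ᵥ (b (k+1+j) *ᵥ x (k+1+j)) := by
        intro j hj
        have hj' := Finset.mem_range.1 hj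
        rw [show m+1-1-(j+1) = m-1-j from by omega,
          hxy (m-1-j) (by omega), hb'def]
        simp only [revB]
        rw [show N-1-(m-1-j) = k+1+j from by omega]
      rw [Finset.sum_congr rfl this,
        show m+1-1-0 = m from by omega, hxy m le_rfl, hNk, hxk, hb'def]
      simp only [revB]
      rw [show N-1-m = k from by omega, add_comm]
    have hD2 : ∑ j ∈ Finset.range m, y (j+1) ⬝ᵥ (c' (j+1) *ᵥ y j)
        = ∑ j ∈ Finset.range m, x (k+1+j) ⬝ᵥ (c (k+1+j) *ᵥ x (k+j)) := by
      rw [← Finset.sum_range_reflect (fun j => y (j+1) ⬝ᵥ (c' (j+1) *ᵥ y j)) m]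
      refine Finset.sum_congr rfl fun j hj => ?_
      have hj' := Finset.mem_range.1 hj
      rw [hc'def]
      simp only [revC]
      rw [dot_t, show m-1-j+1 = m-j from by omega,
        show N-(m-j) = k+1+j from by omega,
        hxy (m-j) (by omega), hxy (m-1-j) (by omega),
        show N-1-(m-j) = k+j from by omega,
        show N-1-(m-1-j) = k+1+j from by omega]
    -- assemble
    have hsplit := Qform_split b c x k (N-1) (by omega)
    have hQ' : Qform b' c' m y =
        ∑ j ∈ Finset.range (m+1), y j ⬝ᵥ (b' j *ᵥ y j)
        + 2 * ∑ j ∈ Finset.range m, y (j+1) ⬝ᵥ (c' (j+1) *ᵥ y j) := rfl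
    have hval : Qform b c (N-1) x =
        v ⬝ᵥ (fwdD b c k *ᵥ v) + v ⬝ᵥ (fwdD b' c' m *ᵥ v) - v ⬝ᵥ (b k *ᵥ v) := by
      rw [hsplit, hA, show N-1-k = m from rfl]
      rw [← hB, hQ', hD1, hD2]
      ring
    have hgoal : star v ⬝ᵥ ((fwdD b c k + bwdD N b c k - b k) *ᵥ v) = Qform b c (N-1) x := by
      rw [star_trivial, hval, Matrix.sub_mulVec, Matrix.add_mulVec, hbwd]
      rw [dotProduct_sub, dotProduct_add]
    rw [hgoal]
    exact hpos _ ⟨k, hk, by rw [hxk]; exact hv⟩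

lemma fwd_solve (N : ℕ) (b c : ℕ → Matrix (Fin n) (Fin n) ℝ) (r X : ℕ → Fin n → ℝ)
    (hinv : ∀ j, j + 1 < N → IsUnit (fwdD b c j).det)
    (hrow0 : b 0 *ᵥ X 0 + (c 1)ᵀ *ᵥ X 1 = r 0)
    (hrow : ∀ k, k + 1 < N →
      c (k+1) *ᵥ X k + b (k+1) *ᵥ X (k+1) + (c (k+2))ᵀ *ᵥ X (k+2) = r (k+1)) :
    ∀ m, m < N → fwdD b c m *ᵥ X m + (c (m+1))ᵀ *ᵥ X (m+1) = fwdS b c r m := by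
  intro m
  induction m with
  | zero => intro _; exact hrow0
  | succ m ih =>
      intro h
      have IH := ih (by omega)
      set d := fwdD b c m with hd
      set s := fwdS b c r m with hs
      have hXm : X m = d⁻¹ *ᵥ (s - (c (m+1))ᵀ *ᵥ X (m+1)) := by
        have h1 : d *ᵥ X m = s - (c (m+1))ᵀ *ᵥ X (m+1) := by
          rw [← IH]; abel
        rw [← h1, Matrix.mulVec_mulVec, Matrix.nonsing_inv_mul _ (hinv m h),
          Matrix.one_mulVec]
      have e1 : c (m+1) *ᵥ X m = (c (m+1) * d⁻¹) *ᵥ s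
          - (c (m+1) * d⁻¹ * (c (m+1))ᵀ) *ᵥ X (m+1) := by
        rw [hXm]
        simp only [Matrix.mulVec_mulVec, Matrix.mulVec_sub, Matrix.mul_assoc]
      have hr := hrow m h
      show (b (m+1) - c (m+1) * d⁻¹ * (c (m+1))ᵀ) *ᵥ X (m+1) + (c (m+2))ᵀ *ᵥ X (m+2)
          = r (m+1) - (c (m+1) * d⁻¹) *ᵥ s
      rw [Matrix.sub_mulVec]
      linear_combination hr - e1

/-- block of `blockTri` at block position `(i,j)` -/
noncomputable def entryBlk (b c : ℕ → Matrix (Fin n) (Fin n) ℝ) (i j : ℕ) :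
    Matrix (Fin n) (Fin n) ℝ :=
  if i = j then b i else if j + 1 = i then c i else if i + 1 = j then (c j)ᵀ else 0

lemma blockTri_entry (N : ℕ) (b c : ℕ → Matrix (Fin n) (Fin n) ℝ) (i j : Fin N)
    (a β : Fin n) : blockTri N n b c (i, a) (j, β) = entryBlk b c ↑i ↑j a β := by
  simp only [blockTri, entryBlk, Fin.ext_iff]
  split_ifs <;> simp [Matrix.transpose_apply]

/-- the double sum of blocks -/
noncomputable def Tq (b c : ℕ → Matrix (Fin n) (Fin n) ℝ) (x : ℕ → Fin n → ℝ) (i j : ℕ) : ℝ :=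
  x i ⬝ᵥ (entryBlk b c i j *ᵥ x j)

lemma sumT (b c : ℕ → Matrix (Fin n) (Fin n) ℝ) (x : ℕ → Fin n → ℝ) :
    ∀ M, ∑ i ∈ Finset.range (M+1), ∑ j ∈ Finset.range (M+1), Tq b c x i j
      = Qform b c M x := by
  intro M
  induction M with
  | zero => simp [Tq, Qform, entryBlk]
  | succ M ih =>
      rw [Finset.sum_range_succ]
      have hrow : ∀ i ∈ Finset.range (M+1), ∑ j ∈ Finset.range (M+2), Tq b c x i j
          = ∑ j ∈ Finset.range (M+1), Tq b c x i j
            + (if i = M then x (M+1) ⬝ᵥ (c (M+1) *ᵥ x M) else 0) := by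
        intro i hi
        have hi' := Finset.mem_range.1 hi
        rw [Finset.sum_range_succ]
        congr 1
        by_cases h : i = M
        · rw [h, if_pos rfl]
          show x M ⬝ᵥ (entryBlk b c M (M+1) *ᵥ x (M+1)) = _
          rw [entryBlk, if_neg (by omega), if_neg (by omega), if_pos rfl, dot_t]
        · rw [if_neg h]
          show x i ⬝ᵥ (entryBlk b c i (M+1) *ᵥ x (M+1)) = 0
          rw [entryBlk, if_neg (by omega), if_neg (by omega), if_neg (by omega)]
          simp
      rw [Finset.sum_congr rfl hrow, Finset.sum_add_distrib, ih,
        Finset.sum_ite_eq' (Finset.range (M+1)) M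
          (fun _ => x (M+1) ⬝ᵥ (c (M+1) *ᵥ x M)),
        if_pos (Finset.mem_range.2 (by omega))]
      have hlast : ∑ j ∈ Finset.range (M+2), Tq b c x (M+1) j
          = x (M+1) ⬝ᵥ (c (M+1) *ᵥ x M) + x (M+1) ⬝ᵥ (b (M+1) *ᵥ x (M+1)) := by
        rw [Finset.sum_range_succ, Finset.sum_range_succ]
        have hz : ∀ j ∈ Finset.range M, Tq b c x (M+1) j = 0 := by
          intro j hj
          have hj' := Finset.mem_range.1 hj
          show x (M+1) ⬝ᵥ (entryBlk b c (M+1) j *ᵥ x j) = 0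
          rw [entryBlk, if_neg (by omega), if_neg (by omega), if_neg (by omega)]
          simp
        rw [Finset.sum_congr rfl hz, Finset.sum_const_zero, zero_add]
        congr 1
        · show x (M+1) ⬝ᵥ (entryBlk b c (M+1) M *ᵥ x M) = _
          rw [entryBlk, if_neg (by omega), if_pos rfl]
        · show x (M+1) ⬝ᵥ (entryBlk b c (M+1) (M+1) *ᵥ x (M+1)) = _
          rw [entryBlk, if_pos rfl]
      rw [hlast, Qform_succ]
      ring

lemma quad_eq (N : ℕ) [NeZero N] (b c : ℕ → Matrix (Fin n) (Fin n) ℝ)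
    (x : ℕ → Fin n → ℝ) :
    (fun p : Fin N × Fin n => x ↑p.1 p.2) ⬝ᵥ
      (blockTri N n b c *ᵥ fun p : Fin N × Fin n => x ↑p.1 p.2)
    = Qform b c (N-1) x := by
  have step1 : (fun p : Fin N × Fin n => x ↑p.1 p.2) ⬝ᵥ
      (blockTri N n b c *ᵥ fun p : Fin N × Fin n => x ↑p.1 p.2)
      = ∑ i : Fin N, ∑ j : Fin N, Tq b c x ↑i ↑j := by
    simp only [dotProduct, Matrix.mulVec, Finset.mul_sum, Fintype.sum_prod_type]
    rw [Finset.sum_congr rfl fun i _ => Finset.sum_comm]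
    refine Finset.sum_congr rfl fun i _ => Finset.sum_congr rfl fun j _ => ?_
    simp only [Tq, dotProduct, Matrix.mulVec, Finset.mul_sum]
    refine Finset.sum_congr rfl fun a _ => Finset.sum_congr rfl fun β _ => ?_
    rw [blockTri_entry]
  have hN : 0 < N := Nat.pos_of_ne_zero (NeZero.ne N)
  rw [step1, Fin.sum_univ_eq_sum_range (fun i => ∑ j : Fin N, Tq b c x i ↑j) N,
    Finset.sum_congr rfl fun i _ => Fin.sum_univ_eq_sum_range (fun j => Tq b c x i j) N,
    show N = (N-1)+1 from by omega]
  exact sumT b c x (N-1)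

lemma mulVec_row (N : ℕ) (b c : ℕ → Matrix (Fin n) (Fin n) ℝ) (e : Fin N × Fin n → ℝ)
    (X : ℕ → Fin n → ℝ) (hX : ∀ (j : Fin N) (β : Fin n), X ↑j β = e (j, β))
    (i : Fin N) (a : Fin n) :
    (blockTri N n b c *ᵥ e) (i, a) = ∑ j ∈ Finset.range N, (entryBlk b c ↑i j *ᵥ X j) a := by
  show ∑ q : Fin N × Fin n, blockTri N n b c (i,a) q * e q = _
  rw [Fintype.sum_prod_type]
  rw [← Fin.sum_univ_eq_sum_range (fun j => (entryBlk b c ↑i j *ᵥ X j) a) N]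
  refine Finset.sum_congr rfl fun j _ => ?_
  show _ = ∑ β, entryBlk b c ↑i ↑j a β * X ↑j β
  refine Finset.sum_congr rfl fun β _ => ?_
  rw [blockTri_entry, hX]

lemma row_zero (N : ℕ) (hN : 0 < N) (b c : ℕ → Matrix (Fin n) (Fin n) ℝ)
    (X : ℕ → Fin n → ℝ) (hXz : ∀ j, N ≤ j → X j = 0) (a : Fin n) :
    ∑ j ∈ Finset.range N, (entryBlk b c 0 j *ᵥ X j) a
      = (b 0 *ᵥ X 0) a + ((c 1)ᵀ *ᵥ X 1) a := by
  have hterm : ∀ j ∈ Finset.range N, (entryBlk b c 0 j *ᵥ X j) a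
      = (if j = 0 then (b 0 *ᵥ X 0) a else 0) + (if j = 1 then ((c 1)ᵀ *ᵥ X 1) a else 0) := by
    intro j _
    match j with
    | 0 => simp [entryBlk]
    | 1 =>
        rw [entryBlk, if_neg (by omega), if_neg (by omega), if_pos rfl]
        simp
    | (j+2) =>
        rw [entryBlk, if_neg (by omega), if_neg (by omega), if_neg (by omega)]
        simp
  rw [Finset.sum_congr rfl hterm, Finset.sum_add_distrib,
    Finset.sum_ite_eq' (Finset.range N) 0 (fun _ => (b 0 *ᵥ X 0) a),
    Finset.sum_ite_eq' (Finset.range N) 1 (fun _ => ((c 1)ᵀ *ᵥ X 1) a),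
    if_pos (Finset.mem_range.2 hN)]
  congr 1
  by_cases h1 : 1 < N
  · rw [if_pos (Finset.mem_range.2 h1)]
  · rw [if_neg (by simp; omega), hXz 1 (by omega)]
    simp
lemma row_succ (N : ℕ) (b c : ℕ → Matrix (Fin n) (Fin n) ℝ) (k : ℕ) (hk : k + 1 < N)
    (X : ℕ → Fin n → ℝ) (hXz : ∀ j, N ≤ j → X j = 0) (a : Fin n) :
    ∑ j ∈ Finset.range N, (entryBlk b c (k+1) j *ᵥ X j) a
      = (c (k+1) *ᵥ X k) a + (b (k+1) *ᵥ X (k+1)) a + ((c (k+2))ᵀ *ᵥ X (k+2)) a := by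
  have hterm : ∀ j ∈ Finset.range N, (entryBlk b c (k+1) j *ᵥ X j) a
      = (if j = k then (c (k+1) *ᵥ X k) a else 0)
        + (if j = k+1 then (b (k+1) *ᵥ X (k+1)) a else 0)
        + (if j = k+2 then ((c (k+2))ᵀ *ᵥ X (k+2)) a else 0) := by
    intro j _
    by_cases h1 : j = k
    · subst h1
      rw [entryBlk, if_neg (by omega), if_pos rfl, if_pos rfl, if_neg (by omega),
        if_neg (by omega)]
      simp
    · by_cases h2 : j = k+1
      · subst h2
        rw [entryBlk, if_pos rfl, if_neg h1, if_pos rfl, if_neg (by omega)]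
        simp
      · by_cases h3 : j = k+2
        · subst h3
          rw [entryBlk, if_neg (by omega), if_neg (by omega), if_pos rfl, if_neg h1,
            if_neg h2, if_pos rfl]
          simp
        · rw [entryBlk, if_neg (by omega), if_neg (by omega), if_neg (by omega),
            if_neg h1, if_neg h2, if_neg h3]
          simp
  rw [Finset.sum_congr rfl hterm, Finset.sum_add_distrib, Finset.sum_add_distrib,
    Finset.sum_ite_eq' (Finset.range N) k (fun _ => (c (k+1) *ᵥ X k) a),
    Finset.sum_ite_eq' (Finset.range N) (k+1) (fun _ => (b (k+1) *ᵥ X (k+1)) a),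
    Finset.sum_ite_eq' (Finset.range N) (k+2) (fun _ => ((c (k+2))ᵀ *ᵥ X (k+2)) a),
    if_pos (Finset.mem_range.2 (by omega)), if_pos (Finset.mem_range.2 (by omega))]
  congr 1
  by_cases h1 : k+2 < N
  · rw [if_pos (Finset.mem_range.2 h1)]
  · rw [if_neg (by simp; omega), hXz (k+2) (by omega)]
    simp

end Stmt13

open Stmt13

/-- **two-filter formula.** -/
theorem stmt13 (N n : ℕ) [NeZero N] [NeZero n]
    (b c : ℕ → Matrix (Fin n) (Fin n) ℝ) (r : ℕ → Fin n → ℝ)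
    (A : Matrix (Fin N × Fin n) (Fin N × Fin n) ℝ) (hAdef : A = blockTri N n b c)
    (hA : A.PosDef)
    (e : Fin N × Fin n → ℝ) (he : A *ᵥ e = fun p => r (p.1 : ℕ) p.2) :
    ∀ k : Fin N, (fun a => e (k, a)) =
      (fwdD b c (k : ℕ) + bwdD N b c (k : ℕ) - b (k : ℕ))⁻¹ *ᵥ
        (fwdS b c r (k : ℕ) + bwdS N b c r (k : ℕ) - r (k : ℕ)) := by
  have hN : 0 < N := Nat.pos_of_ne_zero (NeZero.ne N)
  classical
  set X : ℕ → Fin n → ℝ := fun j => if h : j < N then (fun a => e (⟨j, h⟩, a)) else 0 with hX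
  have hXz : ∀ j, N ≤ j → X j = 0 := by
    intro j hj; rw [hX]; simp only; rw [dif_neg (by omega)]
  have hXe : ∀ (j : Fin N) (β : Fin n), X ↑j β = e (j, β) := by
    intro j β; rw [hX]; simp only; rw [dif_pos j.isLt]
  -- symmetry of the diagonal blocks
  have hbsym : ∀ j, j < N → (b j)ᵀ = b j := by
    intro j hj
    have h1 := hA.1
    rw [hAdef] at h1
    ext α β
    have h2 := congrFun (congrFun h1 ((⟨j, hj⟩ : Fin N), α)) ((⟨j, hj⟩ : Fin N), β)
    simp only [Matrix.conjTranspose_apply, blockTri, if_pos rfl, star_trivial] at h2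
    simpa [Matrix.transpose_apply] using h2
  -- positivity of the quadratic form
  have hpos : ∀ x : ℕ → Fin n → ℝ, (∃ j, j < N ∧ x j ≠ 0) → 0 < Qform b c (N-1) x := by
    rintro x ⟨j, hj, hxj⟩
    obtain ⟨a, ha⟩ : ∃ a, x j a ≠ 0 := by
      by_contra h; push_neg at h; exact hxj (funext h)
    have hE : (fun p : Fin N × Fin n => x ↑p.1 p.2) ≠ 0 := by
      intro h0
      exact ha (by simpa using congrFun h0 ((⟨j, hj⟩ : Fin N), a))
    have hval := hA.dotProduct_mulVec_pos hE
    rw [hAdef, star_trivial, quad_eq N b c x] at hval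
    exact hval
  -- the rows of the system
  have hrow_e : ∀ (i : Fin N) (a : Fin n), (blockTri N n b c *ᵥ e) (i, a) = r ↑i a := by
    intro i a
    rw [← hAdef]
    exact congrFun he (i, a)
  have hrow0 : b 0 *ᵥ X 0 + (c 1)ᵀ *ᵥ X 1 = r 0 := by
    funext a
    have h0 := hrow_e ⟨0, hN⟩ a
    rw [mulVec_row N b c e X hXe ⟨0, hN⟩ a] at h0
    rw [show ((⟨0, hN⟩ : Fin N) : ℕ) = 0 from rfl] at h0
    rw [row_zero N hN b c X hXz a] at h0
    exact h0
  have hrowS : ∀ k', k' + 1 < N →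
      c (k'+1) *ᵥ X k' + b (k'+1) *ᵥ X (k'+1) + (c (k'+2))ᵀ *ᵥ X (k'+2) = r (k'+1) := by
    intro k' hk'
    funext a
    have h0 := hrow_e ⟨k'+1, hk'⟩ a
    rw [mulVec_row N b c e X hXe ⟨k'+1, hk'⟩ a] at h0
    rw [show ((⟨k'+1, hk'⟩ : Fin N) : ℕ) = k'+1 from rfl] at h0
    rw [row_succ N b c k' hk' X hXz a] at h0
    exact h0
  -- primed (reversed) data
  have hb' : ∀ j, j < N → ((revB N b) j)ᵀ = revB N b j := by
    intro j hj
    show (b (N-1-j))ᵀ = b (N-1-j)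
    exact hbsym _ (by omega)
  have hpos' : ∀ y : ℕ → Fin n → ℝ, (∃ j, j < N ∧ y j ≠ 0) →
      0 < Qform (revB N b) (revC N c) (N-1) y := by
    rintro y ⟨j, hj, hy⟩
    rw [Qform_rev N hN]
    exact hpos _ ⟨N-1-j, by omega, by rw [show N-1-(N-1-j) = j from by omega]; exact hy⟩
  have fPD := fwdD_posDef N b c hbsym hpos
  have bPD := fwdD_posDef N (revB N b) (revC N c) hb' hpos'
  have hinv : ∀ j, j + 1 < N → IsUnit (fwdD b c j).det :=
    fun j hj => (fPD j (by omega)).det_pos.ne'.isUnit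
  have hinv' : ∀ j, j + 1 < N → IsUnit (fwdD (revB N b) (revC N c) j).det :=
    fun j hj => (bPD j (by omega)).det_pos.ne'.isUnit
  set Y : ℕ → Fin n → ℝ := fun j => if j < N then X (N-1-j) else 0 with hY
  set r' : ℕ → Fin n → ℝ := fun i => r (N-1-i) with hr'
  -- reversed rows
  have hrow0' : revB N b 0 *ᵥ Y 0 + ((revC N c) 1)ᵀ *ᵥ Y 1 = r' 0 := by
    have e1 : revB N b 0 = b (N-1) := rfl
    have e2 : ((revC N c) 1)ᵀ = c (N-1) := by
      show ((c (N-1))ᵀ)ᵀ = c (N-1); rw [Matrix.transpose_transpose]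
    have e3 : Y 0 = X (N-1) := by rw [hY]; simp only; rw [if_pos hN, show N-1-0 = N-1 from by omega]
    have e4 : r' 0 = r (N-1) := rfl
    rw [e1, e2, e3, e4]
    by_cases h1 : 1 < N
    · have e5 : Y 1 = X (N-2) := by rw [hY]; simp only; rw [if_pos h1, show N-1-1 = N-2 from by omega]
      rw [e5]
      have h := hrowS (N-2) (by omega)
      rw [show N-2+1 = N-1 from by omega, show N-2+2 = N from by omega,
        hXz N le_rfl] at h
      simp only [Matrix.mulVec_zero, add_zero] at h
      linear_combination h
    · have hN1 : N = 1 := by omega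
      have e5 : Y 1 = 0 := by rw [hY]; simp only; rw [if_neg (by omega)]
      rw [e5, Matrix.mulVec_zero, hN1]
      have h := hrow0
      rw [hXz 1 (by omega), Matrix.mulVec_zero, add_zero] at h
      rw [show (1:ℕ)-1 = 0 from rfl]
      linear_combination h
  have hrowS' : ∀ k', k' + 1 < N →
      revC N c (k'+1) *ᵥ Y k' + revB N b (k'+1) *ᵥ Y (k'+1)
        + ((revC N c) (k'+2))ᵀ *ᵥ Y (k'+2) = r' (k'+1) := by
    intro k' hk'
    have e1 : revC N c (k'+1) = (c (N-1-k'))ᵀ := by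
      show (c (N-(k'+1)))ᵀ = _; rw [show N-(k'+1) = N-1-k' from by omega]
    have e2 : revB N b (k'+1) = b (N-2-k') := by
      show b (N-1-(k'+1)) = _; rw [show N-1-(k'+1) = N-2-k' from by omega]
    have e3 : ((revC N c) (k'+2))ᵀ = c (N-2-k') := by
      show ((c (N-(k'+2)))ᵀ)ᵀ = _
      rw [Matrix.transpose_transpose, show N-(k'+2) = N-2-k' from by omega]
    have e4 : Y k' = X (N-1-k') := by rw [hY]; simp only; rw [if_pos (by omega)]
    have e5 : Y (k'+1) = X (N-2-k') := by
      rw [hY]; simp only; rw [if_pos (by omega), show N-1-(k'+1) = N-2-k' from by omega]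
    have e6 : r' (k'+1) = r (N-2-k') := by
      rw [hr']; simp only; rw [show N-1-(k'+1) = N-2-k' from by omega]
    rw [e1, e2, e3, e4, e5, e6]
    by_cases h1 : k' + 2 < N
    · have e7 : Y (k'+2) = X (N-3-k') := by
        rw [hY]; simp only; rw [if_pos (by omega), show N-1-(k'+2) = N-3-k' from by omega]
      rw [e7]
      have h := hrowS (N-3-k') (by omega)
      rw [show N-3-k'+1 = N-2-k' from by omega, show N-3-k'+2 = N-1-k' from by omega] at h
      linear_combination h
    · have e7 : Y (k'+2) = 0 := by rw [hY]; simp only; rw [if_neg (by omega)]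
      rw [e7, Matrix.mulVec_zero, add_zero]
      have h := hrow0
      rw [show N-2-k' = 0 from by omega, show N-1-k' = 1 from by omega]
      linear_combination h
  -- the two elimination identities
  have F := fwd_solve N b c r X hinv hrow0 hrowS
  have B := fwd_solve N (revB N b) (revC N c) r' Y hinv' hrow0' hrowS'
  -- combined equation
  have main : ∀ kk, kk < N →
      (fwdD b c kk + bwdD N b c kk - b kk) *ᵥ X kk
        = fwdS b c r kk + bwdS N b c r kk - r kk := by
    intro kk hkk
    have Fk := F kk hkk
    have Bk := B (N-1-kk) (by omega)
    rw [← bwdAux_eq_fwdD, ← bwdSAux_eq_fwdS] at Bk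
    have hYk : Y (N-1-kk) = X kk := by
      rw [hY]; simp only; rw [if_pos (by omega), show N-1-(N-1-kk) = kk from by omega]
    rw [hYk] at Bk
    have hbwdD : bwdAux N b c (N-1-kk) = bwdD N b c kk := rfl
    have hbwdS : bwdSAux N b c r (N-1-kk) = bwdS N b c r kk := rfl
    rw [hbwdD, hbwdS] at Bk
    rw [Matrix.sub_mulVec, Matrix.add_mulVec]
    rcases Nat.eq_zero_or_pos kk with hk0 | hkpos
    · subst hk0
      have hYtop : Y (N-1-0+1) = 0 := by
        rw [hY]; simp only; rw [if_neg (by omega)]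
      rw [hYtop, Matrix.mulVec_zero, add_zero] at Bk
      linear_combination Fk + Bk - hrow0
    · have hYtop : Y (N-1-kk+1) = X (kk-1) := by
        rw [hY]; simp only
        rw [if_pos (by omega), show N-1-(N-1-kk+1) = kk-1 from by omega]
      have hcT : (revC N c (N-1-kk+1))ᵀ = c kk := by
        show ((c (N-(N-1-kk+1)))ᵀ)ᵀ = _
        rw [Matrix.transpose_transpose, show N-(N-1-kk+1) = kk from by omega]
      rw [hYtop, hcT] at Bk
      have Row := hrowS (kk-1) (by omega)
      rw [show kk-1+1 = kk from by omega, show kk-1+2 = kk+1 from by omega] at Row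
      linear_combination Fk + Bk - Row
  -- conclude
  intro k
  have hM := combined_posDef N hN b c hbsym hpos ↑k k.isLt
  have hdet : IsUnit (fwdD b c ↑k + bwdD N b c ↑k - b ↑k).det := hM.det_pos.ne'.isUnit
  have hXk : (fun a => e (k, a)) = X ↑k := by funext a; exact (hXe k a).symm
  rw [hXk, ← main ↑k k.isLt, Matrix.mulVec_mulVec,
    Matrix.nonsing_inv_mul _ hdet, Matrix.one_mulVec]
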